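/- arXiv:1710.05103 — 2 statements merged into one kernel-verified Lean document; each statement's English description precedes it below -/
import Mathlib

section
/- Let a_{n,μ} be the number of Lyndon words of length n with evaluation μ (i.e., having μ_j occurrences of letter j). Then the total number of length-n words with evaluation μ equals the sum over divisors d of m = gcd(μ₁, μ₂, …) of (n/d)·a_{n/d, μ/d}. -/
/-- A word is Lyndon if it is lexicographically strictly smaller than all of its
non-trivial cyclic shifts. -/
def IsLyndon (w : List ℕ) : Prop :=
  ∀ k : ℕ, 0 < k → k < w.length → List.Lex (· < ·) w (w.rotate k)

namespace LyndonAux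

open List

/-! ### Powers of words -/

def wpow (u : List ℕ) : ℕ → List ℕ
  | 0 => []
  | d + 1 => u ++ wpow u d

@[simp] lemma wpow_zero (u : List ℕ) : wpow u 0 = [] := rfl

lemma wpow_succ (u : List ℕ) (d : ℕ) : wpow u (d + 1) = u ++ wpow u d := rfl

lemma length_wpow (u : List ℕ) (d : ℕ) : (wpow u d).length = d * u.length := by
  induction d with
  | zero => simp
  | succ d ih => simp [wpow_succ, ih, Nat.succ_mul]; ring

lemma count_wpow (u : List ℕ) (d j : ℕ) : (wpow u d).count j = d * u.count j := by
  induction d with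
  | zero => simp
  | succ d ih => simp [wpow_succ, ih, List.count_append, Nat.succ_mul]; ring

/-! ### `getD`-based access -/

lemma ext_getD {l l' : List ℕ} (hl : l.length = l'.length)
    (h : ∀ i, i < l.length → l.getD i 0 = l'.getD i 0) : l = l' := by
  apply List.ext_getElem hl
  intro i h1 h2
  have := h i h1
  rwa [List.getD_eq_getElem _ _ h1, List.getD_eq_getElem _ _ h2] at this

lemma getD_take {w : List ℕ} {p j : ℕ} (hj : j < p) (hjw : j < w.length) :
    (w.take p).getD j 0 = w.getD j 0 := by
  have h1 : j < (w.take p).length := by simp [List.length_take]; omega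
  rw [List.getD_eq_getElem _ _ h1, List.getD_eq_getElem _ _ hjw]
  simp [List.getElem_take]

lemma getD_wpow (u : List ℕ) (d : ℕ) (hu : 0 < u.length) :
    ∀ i, i < (wpow u d).length → (wpow u d).getD i 0 = u.getD (i % u.length) 0 := by
  induction d with
  | zero => intro i hi; simp at hi
  | succ d ih =>
    intro i hi
    rw [wpow_succ]
    by_cases h : i < u.length
    · rw [Nat.mod_eq_of_lt h]
      have h1 : i < (u ++ wpow u d).length := by simp; omega
      rw [List.getD_eq_getElem _ _ h1, List.getD_eq_getElem _ _ h,
        List.getElem_append_left h]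
    · push_neg at h
      have hi' : i - u.length < (wpow u d).length := by
        rw [wpow_succ] at hi; simp at hi; omega
      have h1 : i < (u ++ wpow u d).length := by
        rw [wpow_succ] at hi; simpa using hi
      rw [List.getD_eq_getElem _ _ h1, List.getElem_append_right h]
      rw [← List.getD_eq_getElem _ _ hi', ih _ hi', Nat.mod_eq_sub_mod h]

lemma getD_rotate (w : List ℕ) (k i : ℕ) (hi : i < w.length) :
    (w.rotate k).getD i 0 = w.getD ((i + k) % w.length) 0 := by
  have hw : 0 < w.length := by omega
  have hi' : i < (w.rotate k).length := by simpa using hi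
  rw [List.getD_eq_getElem _ _ hi', List.getD_eq_getElem _ _ (Nat.mod_lt _ hw)]
  exact List.getElem_rotate w k i hi'

lemma rotate_self_iff {w : List ℕ} {k : ℕ} :
    w.rotate k = w ↔ ∀ i, i < w.length → w.getD ((i + k) % w.length) 0 = w.getD i 0 := by
  constructor
  · intro h i hi
    rw [← getD_rotate w k i hi, h]
  · intro h
    apply ext_getD (by simp)
    intro i hi
    have hi' : i < w.length := by simpa using hi
    rw [getD_rotate w k i hi']
    exact h i hi'

/-! ### Periods -/

lemma period_of_rotate_eq {u : List ℕ} {a k : ℕ} (h : u.rotate (a + k) = u.rotate a) :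
    u.rotate k = u := by
  apply List.rotate_injective a
  show (u.rotate k).rotate a = u.rotate a
  rw [List.rotate_rotate, Nat.add_comm k a, h]

lemma period_add {w : List ℕ} {a b : ℕ} (ha : w.rotate a = w) (hb : w.rotate b = w) :
    w.rotate (a + b) = w := by
  rw [← List.rotate_rotate, ha, hb]

lemma period_mul {w : List ℕ} {p : ℕ} (hp : w.rotate p = w) (k : ℕ) : w.rotate (k * p) = w := by
  induction k with
  | zero => simp
  | succ k ih => rw [Nat.succ_mul]; exact period_add ih hp

lemma period_sub {w : List ℕ} {a b : ℕ} (hba : b ≤ a) (ha : w.rotate a = w)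
    (hb : w.rotate b = w) : w.rotate (a - b) = w := by
  apply List.rotate_injective b
  show (w.rotate (a - b)).rotate b = w.rotate b
  rw [List.rotate_rotate, Nat.sub_add_cancel hba, ha, hb]

lemma period_mod {w : List ℕ} {a p : ℕ} (ha : w.rotate a = w) (hp : w.rotate p = w) :
    w.rotate (a % p) = w := by
  have h1 : w.rotate (a / p * p) = w := period_mul hp _
  have h2 : a / p * p ≤ a := Nat.div_mul_le_self a p
  have h3 := period_sub h2 ha h1
  have h4 : a - a / p * p = a % p := by
    rw [Nat.mod_def]; rw [Nat.mul_comm]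
  rwa [h4] at h3

/-! ### Minimal period -/

noncomputable def minP (w : List ℕ) : ℕ := sInf {k | 0 < k ∧ w.rotate k = w}

lemma minP_mem {w : List ℕ} (hw : 0 < w.length) : 0 < minP w ∧ w.rotate (minP w) = w := by
  have hne : {k | 0 < k ∧ w.rotate k = w}.Nonempty := ⟨w.length, hw, w.rotate_length⟩
  exact Nat.sInf_mem hne

lemma minP_pos {w : List ℕ} (hw : 0 < w.length) : 0 < minP w := (minP_mem hw).1

lemma minP_rotate {w : List ℕ} (hw : 0 < w.length) : w.rotate (minP w) = w := (minP_mem hw).2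

lemma minP_le {w : List ℕ} (hw : 0 < w.length) : minP w ≤ w.length :=
  Nat.sInf_le ⟨hw, w.rotate_length⟩

lemma minP_dvd {w : List ℕ} (hw : 0 < w.length) {k : ℕ} (hk : w.rotate k = w) : minP w ∣ k := by
  rcases Nat.eq_zero_or_pos (k % minP w) with h | h
  · exact Nat.dvd_of_mod_eq_zero h
  · exfalso
    have hmod : w.rotate (k % minP w) = w := period_mod hk (minP_rotate hw)
    have hlt : k % minP w < minP w := Nat.mod_lt _ (minP_pos hw)
    exact Nat.notMem_of_lt_sInf hlt ⟨h, hmod⟩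

lemma minP_dvd_length {w : List ℕ} (hw : 0 < w.length) : minP w ∣ w.length :=
  minP_dvd hw w.rotate_length

/-! ### Words with a period are powers -/

lemma getD_mod_period {w : List ℕ} {p : ℕ} (hp : 0 < p) (hrot : w.rotate p = w) :
    ∀ i, i < w.length → w.getD i 0 = w.getD (i % p) 0 := by
  intro i
  induction i using Nat.strong_induction_on with
  | _ i ih =>
    intro hi
    by_cases h : i < p
    · rw [Nat.mod_eq_of_lt h]
    · push_neg at h
      have h2 := rotate_self_iff.mp hrot (i - p) (by omega)
      rw [show (i - p + p) % w.length = i by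
        rw [Nat.sub_add_cancel h, Nat.mod_eq_of_lt hi]] at h2
      rw [h2, Nat.mod_eq_sub_mod h]
      exact ih (i - p) (by omega) (by omega)

lemma eq_wpow {w : List ℕ} (hw : 0 < w.length) (hp : 0 < minP w) :
    w = wpow (w.take (minP w)) (w.length / minP w) := by
  set p := minP w with hpdef
  have hdvd : p ∣ w.length := minP_dvd_length hw
  have hple : p ≤ w.length := minP_le hw
  have hlen : (w.take p).length = p := by simp [List.length_take]; omega
  apply ext_getD
  · rw [length_wpow, hlen, Nat.div_mul_cancel hdvd]
  · intro i hi
    rw [getD_wpow _ _ (by rw [hlen]; exact hp) i (by rw [length_wpow, hlen, Nat.div_mul_cancel hdvd]; exact hi),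
      hlen, getD_take (Nat.mod_lt _ hp) (lt_of_le_of_lt (Nat.mod_le i p) hi)]
    exact getD_mod_period hp (minP_rotate hw) i hi

/-! ### Primitive words -/

def Primitive (w : List ℕ) : Prop := ∀ k, 0 < k → k < w.length → w.rotate k ≠ w

lemma primitive_rotate {w : List ℕ} (h : Primitive w) (r : ℕ) : Primitive (w.rotate r) := by
  intro k hk hk2 hrot
  rw [List.rotate_rotate] at hrot
  exact h k hk (by simpa using hk2) (period_of_rotate_eq hrot)

lemma primitive_take_minP {w : List ℕ} (hw : 0 < w.length) : Primitive (w.take (minP w)) := by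
  set p := minP w with hpdef
  have hp : 0 < p := minP_pos hw
  have hple : p ≤ w.length := minP_le hw
  have hdvd : p ∣ w.length := minP_dvd_length hw
  have hlen : (w.take p).length = p := by simp [List.length_take]; omega
  intro k hk hk2 hrot
  rw [hlen] at hk2
  -- derive that k is a period of w, contradicting minimality
  have hper : w.rotate k = w := by
    rw [rotate_self_iff]
    intro i hi
    have e1 : (i + k) % w.length < w.length := Nat.mod_lt _ (by omega)
    rw [getD_mod_period hp (minP_rotate hw) _ e1, Nat.mod_mod_of_dvd _ hdvd]
    have hu := rotate_self_iff.mp hrot (i % p) (by rw [hlen]; exact Nat.mod_lt _ hp)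
    rw [hlen] at hu
    have e2 : (i % p + k) % p = (i + k) % p := by
      rw [Nat.add_mod, Nat.mod_mod_of_dvd _ (dvd_refl p), ← Nat.add_mod]
    rw [e2] at hu
    rw [getD_take (Nat.mod_lt _ hp) (lt_of_lt_of_le (Nat.mod_lt _ hp) hple),
      getD_take (Nat.mod_lt _ hp) (lt_of_lt_of_le (Nat.mod_lt _ hp) hple)] at hu
    rw [hu]
    exact (getD_mod_period hp (minP_rotate hw) i hi).symm
  exact Nat.notMem_of_lt_sInf hk2 ⟨hk, hper⟩

lemma minP_wpow {u : List ℕ} (hu : Primitive u) (hu0 : 0 < u.length) {d : ℕ} (hd : 0 < d) :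
    minP (wpow u d) = u.length := by
  set w := wpow u d with hwdef
  set p := u.length with hpd
  have hlenw : w.length = d * p := length_wpow u d
  have hw0 : 0 < w.length := by rw [hlenw]; positivity
  have hdvd : p ∣ w.length := by rw [hlenw]; exact dvd_mul_left p d
  have hple : p ≤ w.length := Nat.le_of_dvd hw0 hdvd
  -- p is a period of w
  have hper : w.rotate p = w := by
    rw [rotate_self_iff]
    intro i hi
    have e1 : (i + p) % w.length < w.length := Nat.mod_lt _ (by omega)
    rw [getD_wpow u d hu0 _ e1, getD_wpow u d hu0 i hi, Nat.mod_mod_of_dvd _ hdvd,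
      Nat.add_mod_right]
  have h1 : minP w ∣ p := minP_dvd hw0 hper
  have h2 : minP w ≤ p := Nat.le_of_dvd (by omega) h1
  rcases lt_or_eq_of_le h2 with hlt | heq
  · exfalso
    have hq : 0 < minP w := minP_pos hw0
    -- u has period minP w, contradicting primitivity
    apply hu (minP w) hq hlt
    rw [rotate_self_iff]
    intro j hj
    have hjw : j < w.length := lt_of_lt_of_le hj hple
    have e1 : (j + minP w) % w.length < w.length := Nat.mod_lt _ (by omega)
    have h4 := rotate_self_iff.mp (minP_rotate hw0) j hjw
    rw [getD_wpow u d hu0 _ e1, getD_wpow u d hu0 j hjw, Nat.mod_mod_of_dvd _ hdvd,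
      Nat.mod_eq_of_lt hj] at h4
    exact h4
  · exact heq

lemma take_wpow (u : List ℕ) {d : ℕ} (hd : 0 < d) : (wpow u d).take u.length = u := by
  obtain ⟨e, rfl⟩ : ∃ e, d = e + 1 := ⟨d - 1, by omega⟩
  rw [wpow_succ, List.take_left]

lemma wpow_inj {u u' : List ℕ} {d d' : ℕ} (hu : Primitive u) (hu' : Primitive u')
    (hu0 : 0 < u.length) (hu0' : 0 < u'.length) (hd : 0 < d) (hd' : 0 < d')
    (h : wpow u d = wpow u' d') : u = u' ∧ d = d' := by
  have hp : u.length = u'.length := by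
    rw [← minP_wpow hu hu0 hd, ← minP_wpow hu' hu0' hd', h]
  have hu_eq : u = u' := by
    rw [← take_wpow u hd, ← take_wpow u' hd', h, hp]
  refine ⟨hu_eq, ?_⟩
  have hlen : d * u.length = d' * u'.length := by
    rw [← length_wpow, ← length_wpow, h]
  rw [← hp] at hlen
  exact Nat.eq_of_mul_eq_mul_right hu0 hlen

/-! ### Lyndon words -/

lemma lyndon_primitive {w : List ℕ} (h : _root_.IsLyndon w) : Primitive w := by
  intro k hk hk2 hrot
  have h1 : List.Lex (· < ·) w (w.rotate k) := h k hk hk2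
  rw [hrot] at h1
  exact lt_irrefl w (h1 : w < w)

lemma lyndon_unique {ℓ ℓ' : List ℕ} (h : _root_.IsLyndon ℓ) (h' : _root_.IsLyndon ℓ') {s : ℕ}
    (hs : ℓ' = ℓ.rotate s) : ℓ' = ℓ := by
  rcases Nat.eq_zero_or_pos ℓ.length with h0 | h0
  · rw [List.length_eq_zero_iff] at h0
    subst h0; simpa using hs
  set p := ℓ.length with hp
  have hs' : ℓ' = ℓ.rotate (s % p) := by rw [hs, List.rotate_mod]
  rcases Nat.eq_zero_or_pos (s % p) with hz | hz
  · rw [hz] at hs'; simpa using hs'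
  have hsp : s % p < p := Nat.mod_lt _ h0
  have hlen' : ℓ'.length = p := by rw [hs]; simp [hp]
  have h1 : (ℓ : List ℕ) < ℓ' := by
    rw [hs']; exact h (s % p) hz hsp
  have h2 : (ℓ' : List ℕ) < ℓ := by
    have h3 : List.Lex (· < ·) ℓ' (ℓ'.rotate (p - s % p)) :=
      h' (p - s % p) (by omega) (by omega)
    have h4 : ℓ'.rotate (p - s % p) = ℓ := by
      rw [hs', List.rotate_rotate, Nat.add_sub_cancel' hsp.le, hp, List.rotate_length]
    rw [h4] at h3
    exact h3
  exact absurd h2 (lt_asymm h1)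

lemma rotate_eq_rotate_prim {ℓ : List ℕ} (hp : Primitive ℓ) {r r' : ℕ} (hr : r < ℓ.length)
    (hr' : r' < ℓ.length) (h : ℓ.rotate r = ℓ.rotate r') : r = r' := by
  rcases le_total r r' with hle | hle
  · by_contra hne
    have h0 : 0 < r' - r := by omega
    have h1 : ℓ.rotate (r + (r' - r)) = ℓ.rotate r := by
      rw [Nat.add_sub_cancel' hle, h]
    exact hp _ h0 (by omega) (period_of_rotate_eq h1)
  · by_contra hne
    have h0 : 0 < r - r' := by omega
    have h1 : ℓ.rotate (r' + (r - r')) = ℓ.rotate r' := by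
      rw [Nat.add_sub_cancel' hle, h.symm]
    exact hp _ h0 (by omega) (period_of_rotate_eq h1)

lemma exists_lyndon {u : List ℕ} (hu : Primitive u) (h0 : 0 < u.length) :
    ∃ r < u.length, ∃ ℓ : List ℕ, _root_.IsLyndon ℓ ∧ ℓ.rotate r = u := by
  set p := u.length with hp
  obtain ⟨s, hs, hmin⟩ :=
    (Finset.range p).exists_min_image (fun t => u.rotate t) ⟨0, by simp [h0]⟩
  set ℓ := u.rotate s with hℓ
  have hlenℓ : ℓ.length = p := by simp [hℓ, hp]
  have hlyndon : _root_.IsLyndon ℓ := by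
    intro k hk hk2
    rw [hlenℓ] at hk2
    have e1 : ℓ.rotate k = u.rotate ((s + k) % p) := by
      rw [hℓ, List.rotate_rotate, List.rotate_mod]
    have hle : (ℓ : List ℕ) ≤ ℓ.rotate k := by
      rw [e1]; exact hmin _ (Finset.mem_range.mpr (Nat.mod_lt _ (by omega)))
    have hne : ℓ ≠ ℓ.rotate k := by
      intro hcontra
      rw [hℓ, List.rotate_rotate] at hcontra
      exact hu k hk hk2 (period_of_rotate_eq hcontra.symm)
    exact (lt_of_le_of_ne hle hne : ℓ < ℓ.rotate k)
  refine ⟨(p - s) % p, Nat.mod_lt _ h0, ℓ, hlyndon, ?_⟩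
  rw [show ℓ.rotate ((p - s) % p) = ℓ.rotate (p - s) by rw [← hlenℓ, List.rotate_mod]]
  rw [hℓ, List.rotate_rotate, Nat.add_sub_cancel' (Finset.mem_range.mp hs).le, hp,
    List.rotate_length]

/-! ### Finiteness -/

lemma finite_words (N B : ℕ) (P : List ℕ → Prop)
    (hP : ∀ w, P w → ∀ j ∈ w, j < B) :
    Finite {w : List ℕ // w.length = N ∧ P w} := by
  let F : {w : List ℕ // w.length = N ∧ P w} → (Fin N → Fin (B + 1)) := fun w i =>
    ⟨w.1.getD i 0, by
      have hi : (i : ℕ) < w.1.length := by rw [w.2.1]; exact i.isLt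
      rw [List.getD_eq_getElem _ _ hi]
      exact Nat.lt_succ_of_lt (hP w.1 w.2.2 _ (List.getElem_mem hi))⟩
  apply Finite.of_injective F
  intro w w' h
  apply Subtype.ext
  apply ext_getD (by rw [w.2.1, w'.2.1])
  intro i hi
  have hi' : i < N := by rwa [w.2.1] at hi
  exact congrArg Fin.val (congrFun h ⟨i, hi'⟩)

end LyndonAux

open LyndonAux in
/-- Let `a_{n,μ}` be the number of Lyndon words of length `n` with evaluation `μ`.
Then the number of length-`n` words with evaluation `μ` equals
`Σ_{d ∣ m} (n/d) · a_{n/d, μ/d}` where `m = gcd(μ₁, μ₂, …)`. -/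
theorem count_words_eq_sum_lyndon (n : ℕ) (hn : 0 < n) (μ : ℕ →₀ ℕ)
    (hsum : (μ.sum fun _ v => v) = n) :
    Nat.card {w : List ℕ // w.length = n ∧ ∀ j, w.count j = μ j} =
      ∑ d ∈ (μ.support.gcd μ).divisors,
        (n / d) *
          Nat.card {w : List ℕ // w.length = n / d ∧ (∀ j, w.count j = μ j / d) ∧ IsLyndon w} := by
  classical
  set m := μ.support.gcd μ with hm
  have hmdvd : ∀ j, m ∣ μ j := by
    intro j
    by_cases hj : j ∈ μ.support
    · exact Finset.gcd_dvd hj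
    · rw [Finsupp.notMem_support_iff.mp hj]
      exact dvd_zero m
  have hm0 : m ≠ 0 := by
    intro h0
    have hz : ∀ j, μ j = 0 := fun j => Nat.eq_zero_of_zero_dvd (h0 ▸ hmdvd j)
    have : n = 0 := by
      rw [← hsum, Finsupp.sum]
      exact Finset.sum_eq_zero fun j _ => hz j
    omega
  have hmn : m ∣ n := by
    rw [← hsum, Finsupp.sum]
    exact Finset.dvd_sum fun j _ => hmdvd j
  let A := {w : List ℕ // w.length = n ∧ ∀ j, w.count j = μ j}
  let L : ℕ → Type := fun d =>
    {w : List ℕ // w.length = n / d ∧ (∀ j, w.count j = μ j / d) ∧ IsLyndon w}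
  let S := (d : {x : ℕ // x ∈ m.divisors}) × (Fin (n / (d : ℕ)) × L (d : ℕ))
  have hdiv : ∀ d : ℕ, d ∈ m.divisors → 0 < d ∧ d ∣ n ∧ 0 < n / d := by
    intro d hd
    have hd0 : 0 < d := Nat.pos_of_mem_divisors hd
    have hdn : d ∣ n := (Nat.mem_divisors.mp hd).1.trans hmn
    exact ⟨hd0, hdn, Nat.div_pos (Nat.le_of_dvd hn hdn) hd0⟩
  have key : ∀ x : S, ((wpow ((x.2.2.1).rotate (x.2.1 : ℕ)) (x.1 : ℕ)).length = n ∧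
      ∀ j, (wpow ((x.2.2.1).rotate (x.2.1 : ℕ)) (x.1 : ℕ)).count j = μ j) := by
    rintro ⟨⟨d, hd⟩, ⟨r, hr⟩, ⟨ℓ, hlen, hcount, hlyn⟩⟩
    obtain ⟨hd0, hdn, hnd0⟩ := hdiv d hd
    have hrotlen : (ℓ.rotate r).length = n / d := by simpa using hlen
    constructor
    · rw [length_wpow, hrotlen, Nat.mul_div_cancel' hdn]
    · intro j
      rw [count_wpow]
      have hcr : (ℓ.rotate r).count j = μ j / d := by
        rw [(List.rotate_perm ℓ r).count_eq]
        exact hcount j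
      rw [hcr, Nat.mul_div_cancel' ((Nat.mem_divisors.mp hd).1.trans (hmdvd j))]
  let g : S → A := fun x => ⟨_, key x⟩
  have hinj : Function.Injective g := by
    rintro ⟨⟨d, hd⟩, ⟨r, hr⟩, ⟨ℓ, hlen, hcount, hlyn⟩⟩
      ⟨⟨d', hd'⟩, ⟨r', hr'⟩, ⟨ℓ', hlen', hcount', hlyn'⟩⟩ hg
    have hgeq : wpow (ℓ.rotate r) d = wpow (ℓ'.rotate r') d' := congrArg Subtype.val hg
    obtain ⟨hd0, hdn, hnd0⟩ := hdiv d hd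
    obtain ⟨hd0', hdn', hnd0'⟩ := hdiv d' hd'
    have hprim : Primitive (ℓ.rotate r) := primitive_rotate (lyndon_primitive hlyn) r
    have hprim' : Primitive (ℓ'.rotate r') := primitive_rotate (lyndon_primitive hlyn') r'
    have hlℓ : (ℓ.rotate r).length = n / d := by simpa using hlen
    have hlℓ' : (ℓ'.rotate r').length = n / d' := by simpa using hlen'
    obtain ⟨huu, hdd⟩ := wpow_inj hprim hprim' (by omega) (by omega) hd0 hd0' hgeq
    obtain rfl : d = d' := hdd
    have hs : ℓ' = ℓ.rotate (r + (n / d - r')) := by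
      have e1 : (ℓ'.rotate r').rotate (n / d - r') = ℓ' := by
        rw [List.rotate_rotate, Nat.add_sub_cancel' (le_of_lt hr'), ← hlen', List.rotate_length]
      rw [← e1, ← huu, List.rotate_rotate]
    obtain rfl : ℓ' = ℓ := lyndon_unique hlyn hlyn' hs
    obtain rfl : r = r' :=
      rotate_eq_rotate_prim (lyndon_primitive hlyn) (by rw [hlen]; exact hr)
        (by rw [hlen]; exact hr') huu
    rfl
  have hsurj : Function.Surjective g := by
    rintro ⟨w, hwlen, hwcount⟩
    have hw0 : 0 < w.length := by rw [hwlen]; exact hn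
    set p := minP w with hpdef
    have hp0 : 0 < p := minP_pos hw0
    have hple : p ≤ w.length := minP_le hw0
    have hpdvd : p ∣ w.length := minP_dvd_length hw0
    set u := w.take p with hudef
    have hulen : u.length = p := by
      rw [hudef, List.length_take]; omega
    have huprim : Primitive u := primitive_take_minP hw0
    have hwu : w = wpow u (w.length / p) := eq_wpow hw0 hp0
    set d := n / p with hddef
    have hwd : w.length / p = d := by rw [hwlen]
    rw [hwd] at hwu
    have hd0 : 0 < d := Nat.div_pos (by omega) hp0
    have hcu : ∀ j, μ j = d * u.count j := by
      intro j
      rw [← hwcount j, hwu, count_wpow]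
    have hddvd : d ∣ m := Finset.dvd_gcd fun j _ => ⟨u.count j, hcu j⟩
    have hdmem : d ∈ m.divisors := Nat.mem_divisors.mpr ⟨hddvd, hm0⟩
    have hnd : n / d = p := by
      rw [hddef]
      exact Nat.div_div_self (hwlen ▸ hpdvd) (by omega)
    obtain ⟨r, hrlt, ℓ, hlyn, hrot⟩ := exists_lyndon huprim (by omega)
    have hℓlen : ℓ.length = n / d := by
      rw [hnd, ← hulen, ← hrot]; simp
    have hℓcount : ∀ j, ℓ.count j = μ j / d := by
      intro j
      have hcc : u.count j = ℓ.count j := by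
        rw [← hrot, (List.rotate_perm ℓ r).count_eq]
      rw [← hcc, hcu j, Nat.mul_div_cancel_left _ hd0]
    refine ⟨⟨⟨d, hdmem⟩, ⟨⟨r, by rw [hnd]; rw [hulen] at hrlt; exact hrlt⟩,
      ⟨ℓ, hℓlen, hℓcount, hlyn⟩⟩⟩, ?_⟩
    apply Subtype.ext
    show wpow (ℓ.rotate r) d = w
    rw [hrot, ← hwu]
  have hfinL : ∀ d : ℕ, Finite (L d) := by
    intro d
    apply finite_words (n / d) (μ.support.sup id + 1)
      (fun w => (∀ j, w.count j = μ j / d) ∧ IsLyndon w)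
    intro w hw j hj
    have h1 : 0 < w.count j := List.count_pos_iff.mpr hj
    rw [hw.1 j] at h1
    have h2 : μ j ≠ 0 := by
      intro h0
      rw [h0, Nat.zero_div] at h1
      omega
    have h3 : j ∈ μ.support := Finsupp.mem_support_iff.mpr h2
    have h4 : j ≤ μ.support.sup id := Finset.le_sup (f := id) h3
    omega
  haveI : ∀ d : ℕ, Finite (L d) := hfinL
  haveI instLF : ∀ d : {x : ℕ // x ∈ m.divisors}, Fintype (L (d : ℕ)) :=
    fun d => Fintype.ofFinite _
  calc Nat.card {w : List ℕ // w.length = n ∧ ∀ j, w.count j = μ j}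
      = Nat.card S := (Nat.card_eq_of_bijective g ⟨hinj, hsurj⟩).symm
    _ = ∑ d : {x : ℕ // x ∈ m.divisors}, (n / (d : ℕ)) * Nat.card (L (d : ℕ)) := by
        show Nat.card ((d : {x : ℕ // x ∈ m.divisors}) × (Fin (n / (d : ℕ)) × L (d : ℕ))) = _
        rw [Nat.card_eq_fintype_card]
        rw [Fintype.card_sigma]
        exact Finset.sum_congr rfl fun d _ => by
          rw [Fintype.card_prod, Fintype.card_fin, Nat.card_eq_fintype_card]
    _ = ∑ d ∈ m.divisors, (n / d) * Nat.card (L d) :=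
        Finset.sum_coe_sort m.divisors (fun d => (n / d) * Nat.card (L d))
end

section
/- For 1 ≤ i ≤ (n-1)/2, β_n({2, 4, …, 2i-2}) + β_n({2, 4, …, 2i}) = C(n, 2i) · E_{2i}, where E_{2i} is the number of alternating (up–down) permutations of [2i]. -/
open Finset

/-- The value `π(i)` of a permutation of `[n]`, in 1-based position notation. -/
def permVal {n : ℕ} (π : Equiv.Perm (Fin n)) (i : ℕ) : ℕ :=
  if h : i - 1 < n then ((π ⟨i - 1, h⟩ : Fin n) : ℕ) else 0

/-- The descent set `D(π) = {i ∈ [n-1] : π(i) > π(i+1)}` (1-based). -/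
def descSet {n : ℕ} (π : Equiv.Perm (Fin n)) : Finset ℕ :=
  (Finset.Ioo 0 n).filter fun i => permVal π (i + 1) < permVal π i

/-- `π` is an `n`-cycle: a permutation of `[n]` consisting of a single cycle of length `n`. -/
def IsFullCycle {n : ℕ} (π : Equiv.Perm (Fin n)) : Prop :=
  ∀ x y : Fin n, ∃ k : ℕ, (π ^ k) x = y

/-- `α_n(I)`: number of permutations of `[n]` with descent set contained in `I`. -/
noncomputable def alphaP (n : ℕ) (I : Finset ℕ) : ℕ :=
  Nat.card {π : Equiv.Perm (Fin n) // descSet π ⊆ I}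

/-- `α^cyc_n(I)`: number of `n`-cycles with descent set contained in `I`. -/
noncomputable def alphaC (n : ℕ) (I : Finset ℕ) : ℕ :=
  Nat.card {π : Equiv.Perm (Fin n) // IsFullCycle π ∧ descSet π ⊆ I}

/-- `β_n(I)`: number of permutations of `[n]` with descent set exactly `I`. -/
noncomputable def betaP (n : ℕ) (I : Finset ℕ) : ℕ :=
  Nat.card {π : Equiv.Perm (Fin n) // descSet π = I}

/-- `β^cyc_n(I)`: number of `n`-cycles with descent set exactly `I`. -/
noncomputable def betaC (n : ℕ) (I : Finset ℕ) : ℕ :=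
  Nat.card {π : Equiv.Perm (Fin n) // IsFullCycle π ∧ descSet π = I}

/-- `I/d = {i/d : i ∈ I, d ∣ i}`. -/
def divSet (I : Finset ℕ) (d : ℕ) : Finset ℕ :=
  (I.filter fun i => d ∣ i).image (· / d)

/-- The set `{2, 4, …, 2i}`. -/
def evensTo (i : ℕ) : Finset ℕ := (Finset.Icc 1 i).image fun j => 2 * j


private lemma permVal_lt_iff {N : ℕ} (π : Equiv.Perm (Fin N)) {j : ℕ} (h0 : 0 < j) (h1 : j < N) :
    (permVal π (j+1) < permVal π j) ↔ ((π ⟨j, h1⟩ : ℕ) < (π ⟨j-1, by omega⟩ : ℕ)) := by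
  have e1 : permVal π (j+1) = ((π ⟨j, h1⟩ : Fin N) : ℕ) := by
    simp only [permVal, Nat.add_sub_cancel, dif_pos h1]
  have h2 : j - 1 < N := by omega
  have e2 : permVal π j = ((π ⟨j-1, h2⟩ : Fin N) : ℕ) := by
    simp only [permVal, dif_pos h2]
  rw [e1, e2]

private lemma mem_descSet_iff {N : ℕ} (π : Equiv.Perm (Fin N)) {j : ℕ} (h0 : 0 < j) (h1 : j < N) :
    j ∈ descSet π ↔ ((π ⟨j, h1⟩ : ℕ) < (π ⟨j-1, by omega⟩ : ℕ)) := by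
  rw [descSet, Finset.mem_filter, Finset.mem_Ioo, permVal_lt_iff π h0 h1]
  exact ⟨fun h => h.2, fun h => ⟨⟨h0, h1⟩, h⟩⟩

private lemma descSet_or_iff {n m : ℕ} (hm0 : 0 < m) (hmn : m < n) {J : Finset ℕ}
    (hJ : ∀ j ∈ J, 0 < j ∧ j < m) (π : Equiv.Perm (Fin n)) :
    (descSet π = J ∨ descSet π = insert m J) ↔
      ∀ j, 0 < j → j < n → j ≠ m → (j ∈ descSet π ↔ j ∈ J) := by
  constructor
  · rintro (h | h) j h0 h1 hjm <;> rw [h] <;> simp [Finset.mem_insert, hjm]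
  · intro hg
    have hbnd : ∀ j ∈ descSet π, 0 < j ∧ j < n := by
      intro j hj
      exact Finset.mem_Ioo.mp (Finset.mem_filter.mp hj).1
    by_cases hd : m ∈ descSet π
    · right
      ext j
      by_cases hjm : j = m
      · subst hjm; simp [hd]
      · rw [Finset.mem_insert]
        constructor
        · intro hmem
          obtain ⟨a, b⟩ := hbnd j hmem
          exact Or.inr ((hg j a b hjm).mp hmem)
        · rintro (rfl | hj)
          · exact absurd rfl hjm
          · obtain ⟨a, b⟩ := hJ j hj
            exact (hg j a (by omega) hjm).mpr hj
    · left
      ext j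
      by_cases hjm : j = m
      · subst hjm
        simp only [hd, false_iff]
        intro hj; have := hJ _ hj; omega
      · constructor
        · intro hmem
          obtain ⟨a, b⟩ := hbnd j hmem
          exact (hg j a b hjm).mp hmem
        · intro hj
          obtain ⟨a, b⟩ := hJ j hj
          exact (hg j a (by omega) hjm).mpr hj

section Build
variable {n m : ℕ}

private lemma card_compl_eq (S : Finset (Fin n)) (hS : S.card = m) : Sᶜ.card = n - m := by
  rw [Finset.card_compl, hS, Fintype.card_fin]

private def bfun (hmn : m < n) (S : Finset (Fin n)) (hS : S.card = m)
    (σ : Equiv.Perm (Fin m)) (j : Fin n) : Fin n :=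
  if h : (j : ℕ) < m then S.orderEmbOfFin hS (σ ⟨j, h⟩)
  else Sᶜ.orderEmbOfFin (card_compl_eq S hS) ⟨(j : ℕ) - m, by have := j.isLt; omega⟩

private lemma bfun_inj (hmn : m < n) (S : Finset (Fin n)) (hS : S.card = m)
    (σ : Equiv.Perm (Fin m)) : Function.Injective (bfun hmn S hS σ) := by
  intro a b hab
  unfold bfun at hab
  split_ifs at hab with ha hb hb
  · have h1 := (S.orderEmbOfFin hS).injective hab
    have h2 := σ.injective h1
    have := congrArg Fin.val h2
    exact Fin.ext this
  · exfalso
    have h1 := Finset.orderEmbOfFin_mem S hS (σ ⟨a, ha⟩)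
    have h2 := Finset.orderEmbOfFin_mem Sᶜ (card_compl_eq S hS)
      ⟨(b : ℕ) - m, by have := b.isLt; omega⟩
    rw [hab] at h1
    rw [Finset.mem_compl] at h2
    exact h2 h1
  · exfalso
    have h1 := Finset.orderEmbOfFin_mem S hS (σ ⟨b, hb⟩)
    have h2 := Finset.orderEmbOfFin_mem Sᶜ (card_compl_eq S hS)
      ⟨(a : ℕ) - m, by have := a.isLt; omega⟩
    rw [← hab] at h1
    rw [Finset.mem_compl] at h2
    exact h2 h1
  · have h1 := (Sᶜ.orderEmbOfFin (card_compl_eq S hS)).injective hab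
    have := congrArg Fin.val h1
    simp only at this
    exact Fin.ext (by omega)

private noncomputable def buildPerm (hmn : m < n) (S : Finset (Fin n)) (hS : S.card = m)
    (σ : Equiv.Perm (Fin m)) : Equiv.Perm (Fin n) :=
  Equiv.ofBijective (bfun hmn S hS σ)
    (Finite.injective_iff_bijective.mp (bfun_inj hmn S hS σ))

private lemma buildPerm_apply_lt (hmn : m < n) (S : Finset (Fin n)) (hS : S.card = m)
    (σ : Equiv.Perm (Fin m)) (j : Fin n) (h : (j : ℕ) < m) :
    buildPerm hmn S hS σ j = S.orderEmbOfFin hS (σ ⟨j, h⟩) := by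
  simp only [buildPerm, Equiv.ofBijective_apply, bfun, dif_pos h]

private lemma buildPerm_apply_ge (hmn : m < n) (S : Finset (Fin n)) (hS : S.card = m)
    (σ : Equiv.Perm (Fin m)) (j : Fin n) (h : ¬ (j : ℕ) < m) :
    buildPerm hmn S hS σ j =
      Sᶜ.orderEmbOfFin (card_compl_eq S hS) ⟨(j : ℕ) - m, by have := j.isLt; omega⟩ := by
  simp only [buildPerm, Equiv.ofBijective_apply, bfun, dif_neg h]

end Build

section Desc
variable {n m : ℕ}

private lemma buildPerm_desc (hmn : m < n) (S : Finset (Fin n)) (hS : S.card = m)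
    (σ : Equiv.Perm (Fin m)) :
    ∀ j, 0 < j → j < n → j ≠ m →
      (j ∈ descSet (buildPerm hmn S hS σ) ↔ j ∈ descSet σ) := by
  intro j h0 h1 hjm
  rw [mem_descSet_iff _ h0 h1]
  by_cases hj : j < m
  · rw [mem_descSet_iff σ h0 hj]
    have hj' : j - 1 < m := by omega
    rw [buildPerm_apply_lt hmn S hS σ ⟨j, h1⟩ hj,
        buildPerm_apply_lt hmn S hS σ ⟨j-1, by omega⟩ hj']
    have key : ∀ x y : Fin m,
        ((S.orderEmbOfFin hS x : Fin n) : ℕ) < ((S.orderEmbOfFin hS y : Fin n) : ℕ) ↔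
          (x : ℕ) < (y : ℕ) := by
      intro x y
      rw [← Fin.lt_def, ← Fin.lt_def, (S.orderEmbOfFin hS).lt_iff_lt]
    exact key _ _
  · have hjgt : m < j := by omega
    rw [buildPerm_apply_ge hmn S hS σ ⟨j, h1⟩ hj,
        buildPerm_apply_ge hmn S hS σ ⟨j-1, by omega⟩ (by simp; omega)]
    have hlt : Sᶜ.orderEmbOfFin (card_compl_eq S hS) ⟨j - 1 - m, by omega⟩ <
        Sᶜ.orderEmbOfFin (card_compl_eq S hS) ⟨j - m, by omega⟩ :=
      (Sᶜ.orderEmbOfFin (card_compl_eq S hS)).strictMono (by rw [Fin.lt_def]; simp; omega)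
    rw [Fin.lt_def] at hlt
    have hn1 : ¬ ((Sᶜ.orderEmbOfFin (card_compl_eq S hS) ⟨(j : ℕ) - m, by omega⟩ : Fin n) : ℕ) <
        ((Sᶜ.orderEmbOfFin (card_compl_eq S hS) ⟨j - 1 - m, by omega⟩ : Fin n) : ℕ) := by omega
    have hn2 : j ∉ descSet σ := by
      intro hmem
      have := Finset.mem_Ioo.mp (Finset.mem_filter.mp hmem).1
      omega
    simp only [hn2, iff_false]
    exact hn1

private lemma buildPerm_or (hm0 : 0 < m) (hmn : m < n) {J : Finset ℕ}
    (hJ : ∀ j ∈ J, 0 < j ∧ j < m) (S : Finset (Fin n)) (hS : S.card = m)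
    (σ : Equiv.Perm (Fin m)) (hσ : descSet σ = J) :
    descSet (buildPerm hmn S hS σ) = J ∨ descSet (buildPerm hmn S hS σ) = insert m J :=
  (descSet_or_iff hm0 hmn hJ _).mpr
    (fun j a b c => by rw [buildPerm_desc hmn S hS σ j a b c, hσ])

end Desc

section Bij
variable {n m : ℕ}

private lemma image_buildPerm (hmn : m < n) (S : Finset (Fin n)) (hS : S.card = m)
    (σ : Equiv.Perm (Fin m)) :
    Finset.image (fun k : Fin m => buildPerm hmn S hS σ ⟨k.val, by have := k.isLt; omega⟩)
      Finset.univ = S := by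
  have hinj : Function.Injective
      (fun k : Fin m => buildPerm hmn S hS σ ⟨k.val, by have := k.isLt; omega⟩) := by
    intro a b hab
    have h1 := (buildPerm hmn S hS σ).injective hab
    exact Fin.ext (by simpa using h1)
  apply Finset.eq_of_subset_of_card_le
  · intro x hx
    obtain ⟨k, _, rfl⟩ := Finset.mem_image.mp hx
    rw [buildPerm_apply_lt hmn S hS σ ⟨k.val, by have := k.isLt; omega⟩ k.isLt]
    exact Finset.orderEmbOfFin_mem S hS _
  · rw [Finset.card_image_of_injective _ hinj, hS, Finset.card_univ, Fintype.card_fin]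

private lemma buildPerm_inj (hmn : m < n) (S S' : Finset (Fin n)) (hS : S.card = m)
    (hS' : S'.card = m) (σ σ' : Equiv.Perm (Fin m))
    (h : buildPerm hmn S hS σ = buildPerm hmn S' hS' σ') : S = S' ∧ σ = σ' := by
  have hSS : S = S' := by
    rw [← image_buildPerm hmn S hS σ, ← image_buildPerm hmn S' hS' σ', h]
  subst hSS
  refine ⟨rfl, ?_⟩
  ext k
  have hk := DFunLike.congr_fun h (⟨k.val, by have := k.isLt; omega⟩ : Fin n)
  rw [buildPerm_apply_lt hmn S hS σ _ k.isLt, buildPerm_apply_lt hmn S hS' σ' _ k.isLt] at hk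
  have h2 : σ ⟨k.val, k.isLt⟩ = σ' ⟨k.val, k.isLt⟩ := (S.orderEmbOfFin hS).injective hk
  have := congrArg Fin.val h2
  simpa using this

end Bij

section Surj
variable {n m : ℕ}

private lemma buildPerm_surj (hm0 : 0 < m) (hmn : m < n) {J : Finset ℕ}
    (hJ : ∀ j ∈ J, 0 < j ∧ j < m) (π : Equiv.Perm (Fin n))
    (hπ : descSet π = J ∨ descSet π = insert m J) :
    ∃ S : Finset (Fin n), ∃ hS : S.card = m, ∃ σ : Equiv.Perm (Fin m),
      descSet σ = J ∧ buildPerm hmn S hS σ = π := by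
  have hg := (descSet_or_iff hm0 hmn hJ π).mp hπ
  set c : Fin m → Fin n := fun k => ⟨k.val, by have := k.isLt; omega⟩ with hc
  have hcinj : Function.Injective (fun k : Fin m => π (c k)) := by
    intro a b hab
    have h1 := π.injective hab
    exact Fin.ext (by simpa [hc] using congrArg Fin.val h1)
  set S : Finset (Fin n) := Finset.image (fun k => π (c k)) Finset.univ with hSdef
  have hS : S.card = m := by
    rw [hSdef, Finset.card_image_of_injective _ hcinj, Finset.card_univ, Fintype.card_fin]
  have hmemS : ∀ x : Fin n, x ∈ S ↔ ∃ k : Fin m, π (c k) = x := by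
    intro x; simp [hSdef]
  have hπc : ∀ k : Fin m, π (c k) ∈ S := fun k => (hmemS _).mpr ⟨k, rfl⟩
  set g : Fin m → Fin m := fun k => (S.orderIsoOfFin hS).symm ⟨π (c k), hπc k⟩ with hgdef
  have hginj : Function.Injective g := by
    intro a b hab
    rw [hgdef] at hab
    have h2 := congrArg (fun z => ((S.orderIsoOfFin hS) z : Fin n)) hab
    simp only [OrderIso.apply_symm_apply] at h2
    have h3 := π.injective h2
    exact Fin.ext (by simpa [hc] using congrArg Fin.val h3)
  set σ : Equiv.Perm (Fin m) :=
    Equiv.ofBijective g (Finite.injective_iff_bijective.mp hginj) with hσdef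
  have hkey : ∀ k : Fin m, (S.orderEmbOfFin hS (σ k) : Fin n) = π (c k) := by
    intro k
    show (S.orderEmbOfFin hS (g k)) = π (c k)
    rw [← Finset.coe_orderIsoOfFin_apply, hgdef]
    simp
  -- the ascending part of π
  have hasc : ∀ t : ℕ, (ht : m + t + 1 < n) →
      ((π ⟨m + t, by omega⟩ : Fin n) : ℕ) < ((π ⟨m + t + 1, ht⟩ : Fin n) : ℕ) := by
    intro t ht
    have hnd : ¬ ((m + t + 1) ∈ descSet π) := by
      rw [hg (m+t+1) (by omega) ht (by omega)]
      intro hmem; have := hJ _ hmem; omega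
    rw [mem_descSet_iff π (by omega) ht] at hnd
    have hnd' : ¬ (((π ⟨m+t+1, ht⟩ : Fin n) : ℕ) < ((π ⟨m+t, by omega⟩ : Fin n) : ℕ)) := hnd
    have hne : ((π ⟨m+t, by omega⟩ : Fin n) : ℕ) ≠ ((π ⟨m+t+1, ht⟩ : Fin n) : ℕ) := by
      intro he
      have h4 : (π ⟨m+t, by omega⟩ : Fin n) = π ⟨m+t+1, ht⟩ := Fin.ext he
      have h5 := π.injective h4
      have := congrArg Fin.val h5
      simp only at this
      omega
    omega
  set u : Fin (n - m) → Fin n := fun t => π ⟨m + t.val, by have := t.isLt; omega⟩ with hu0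
  have mono : ∀ a b (hab : a < b) (hb : b < n - m),
      ((u ⟨a, by omega⟩ : Fin n) : ℕ) < ((u ⟨b, hb⟩ : Fin n) : ℕ) := by
    intro a b hab
    induction b, hab using Nat.le_induction with
    | base =>
      intro hb
      exact hasc a (by omega)
    | succ k hk ih =>
      intro hb
      exact lt_trans (ih (by omega)) (hasc k (by omega))
  have humono : StrictMono u := by
    intro a b hab
    have h6 := mono a.val b.val hab b.isLt
    rw [Fin.lt_def]
    exact h6
  have humem : ∀ t, u t ∈ Sᶜ := by
    intro t
    rw [Finset.mem_compl]
    intro hmem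
    obtain ⟨k, hk⟩ := (hmemS _).mp hmem
    have h7 := π.injective hk
    have h8 := congrArg Fin.val h7
    simp only [hc] at h8
    have := k.isLt; have := t.isLt
    omega
  have hu : u = ⇑(Sᶜ.orderEmbOfFin (card_compl_eq S hS)) :=
    Finset.orderEmbOfFin_unique _ humem humono
  have hσd : descSet σ = J := by
    ext j
    by_cases hjb : 0 < j ∧ j < m
    · obtain ⟨a, b⟩ := hjb
      rw [mem_descSet_iff σ a b, ← hg j a (by omega) (by omega),
        mem_descSet_iff π a (by omega)]
      have e1 : (π ⟨j, by omega⟩ : Fin n) = S.orderEmbOfFin hS (σ ⟨j, b⟩) :=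
        (hkey ⟨j, b⟩).symm
      have e2 : (π ⟨j-1, by omega⟩ : Fin n) = S.orderEmbOfFin hS (σ ⟨j-1, by omega⟩) :=
        (hkey ⟨j-1, by omega⟩).symm
      rw [e1, e2]
      have key : ∀ x y : Fin m,
          ((S.orderEmbOfFin hS x : Fin n) : ℕ) < ((S.orderEmbOfFin hS y : Fin n) : ℕ) ↔
            (x : ℕ) < (y : ℕ) := by
        intro x y
        rw [← Fin.lt_def, ← Fin.lt_def, (S.orderEmbOfFin hS).lt_iff_lt]
      exact (key _ _).symm
    · have h1 : j ∉ descSet σ := by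
        intro hmem
        have := Finset.mem_Ioo.mp (Finset.mem_filter.mp hmem).1
        omega
      have h2 : j ∉ J := fun hmem => hjb (hJ j hmem)
      simp [h1, h2]
  refine ⟨S, hS, σ, hσd, ?_⟩
  ext j
  by_cases hj : (j : ℕ) < m
  · rw [buildPerm_apply_lt hmn S hS σ j hj, hkey ⟨(j : ℕ), hj⟩]
  · have e3 : (Sᶜ.orderEmbOfFin (card_compl_eq S hS)) ⟨(j:ℕ) - m, by have := j.isLt; omega⟩ =
        u ⟨(j:ℕ) - m, by have := j.isLt; omega⟩ := by rw [hu]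
    rw [buildPerm_apply_ge hmn S hS σ j hj, e3]
    have e4 : (⟨m + ((j:ℕ) - m), by have := j.isLt; omega⟩ : Fin n) = j :=
      Fin.ext (by show m + ((j:ℕ) - m) = (j:ℕ); omega)
    exact congrArg (fun z => ((π z : Fin n) : ℕ)) e4

end Surj

private lemma core_count {n m : ℕ} (hm0 : 0 < m) (hmn : m < n) {J : Finset ℕ}
    (hJ : ∀ j ∈ J, 0 < j ∧ j < m) :
    Nat.card {π : Equiv.Perm (Fin n) // descSet π = J ∨ descSet π = insert m J} =
      n.choose m * Nat.card {σ : Equiv.Perm (Fin m) // descSet σ = J} := by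
  classical
  let F : ({S : Finset (Fin n) // S.card = m} × {σ : Equiv.Perm (Fin m) // descSet σ = J}) →
      {π : Equiv.Perm (Fin n) // descSet π = J ∨ descSet π = insert m J} :=
    fun p => ⟨buildPerm hmn p.1.1 p.1.2 p.2.1, buildPerm_or hm0 hmn hJ _ _ _ p.2.2⟩
  have hbij : Function.Bijective F := by
    constructor
    · rintro ⟨⟨S, hS⟩, ⟨σ, hσ⟩⟩ ⟨⟨S', hS'⟩, ⟨σ', hσ'⟩⟩ h
      have h0 : buildPerm hmn S hS σ = buildPerm hmn S' hS' σ' := congrArg Subtype.val h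
      obtain ⟨h1, h2⟩ := buildPerm_inj hmn S S' hS hS' σ σ' h0
      subst h1
      subst h2
      rfl
    · rintro ⟨π, hπ⟩
      obtain ⟨S, hS, σ, hσd, hb⟩ := buildPerm_surj hm0 hmn hJ π hπ
      exact ⟨⟨⟨S, hS⟩, ⟨σ, hσd⟩⟩, Subtype.ext hb⟩
  have hcard := Nat.card_congr (Equiv.ofBijective F hbij)
  rw [Nat.card_prod] at hcard
  rw [← hcard]
  congr 1
  rw [Nat.card_eq_fintype_card, Fintype.card_finset_len, Fintype.card_fin]

private lemma card_or_split {n : ℕ} (A B : Finset ℕ) (hAB : A ≠ B) :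
    Nat.card {π : Equiv.Perm (Fin n) // descSet π = A ∨ descSet π = B} =
      Nat.card {π : Equiv.Perm (Fin n) // descSet π = A} +
        Nat.card {π : Equiv.Perm (Fin n) // descSet π = B} := by
  classical
  rw [Nat.card_eq_fintype_card, Nat.card_eq_fintype_card, Nat.card_eq_fintype_card,
    Fintype.card_subtype, Fintype.card_subtype, Fintype.card_subtype]
  have hdisj : Disjoint (Finset.univ.filter fun π : Equiv.Perm (Fin n) => descSet π = A)
      (Finset.univ.filter fun π : Equiv.Perm (Fin n) => descSet π = B) := by
    refine Finset.disjoint_left.mpr ?_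
    intro π h1 h2
    rw [Finset.mem_filter] at h1 h2
    exact hAB (h1.2 ▸ h2.2 ▸ rfl)
  rw [Finset.filter_or, Finset.card_union_of_disjoint hdisj]

/-- For `1 ≤ i ≤ (n-1)/2`,
`β_n({2, 4, …, 2i-2}) + β_n({2, 4, …, 2i}) = C(n, 2i) · E_{2i}`,
where `E_{2i} = β_{2i}({2, 4, …, 2i-2})` counts alternating permutations of `[2i]`. -/
theorem betaP_evens_add (n i : ℕ) (hi : 1 ≤ i) (hin : 2 * i < n) :
    betaP n (evensTo (i - 1)) + betaP n (evensTo i) =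
      n.choose (2 * i) * betaP (2 * i) (evensTo (i - 1)) := by
  have hm0 : 0 < 2 * i := by omega
  have hJ : ∀ j ∈ evensTo (i-1), 0 < j ∧ j < 2*i := by
    intro j hj
    simp only [evensTo, Finset.mem_image, Finset.mem_Icc] at hj
    obtain ⟨l, ⟨h1, h2⟩, rfl⟩ := hj
    omega
  have hins : evensTo i = insert (2*i) (evensTo (i-1)) := by
    ext j
    simp only [evensTo, Finset.mem_insert, Finset.mem_image, Finset.mem_Icc]
    constructor
    · rintro ⟨l, ⟨h1, h2⟩, rfl⟩
      by_cases hl : l = i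
      · subst hl; exact Or.inl rfl
      · exact Or.inr ⟨l, ⟨h1, by omega⟩, rfl⟩
    · rintro (rfl | ⟨l, ⟨h1, h2⟩, rfl⟩)
      · exact ⟨i, ⟨hi, le_refl i⟩, rfl⟩
      · exact ⟨l, ⟨h1, by omega⟩, rfl⟩
  have hne : evensTo (i-1) ≠ insert (2*i) (evensTo (i-1)) := by
    intro h
    have h2 : 2*i ∈ evensTo (i-1) := h ▸ Finset.mem_insert_self _ _
    have := hJ _ h2
    omega
  unfold betaP
  rw [hins, ← card_or_split _ _ hne, core_count hm0 hin hJ]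
end
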